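/- Let (xₙ) be a sequence of self-adjoint elements of 𝔐 and (αₙ) a sequence of real numbers such that xₙ − αₙ → 0 in measure, i.e. τ(e_ε^⊥(|xₙ − αₙ|)) → 0 for every ε > 0. Then the symmetrizations x̂ₙ := xₙ ⊗ 1 − 1 ⊗ xₙ converge to 0 in measure in (𝔐 ⊗ 𝔐, τ ⊗ τ), and αₙ − med(xₙ) → 0. In particular, if xₙ → 0 in measure then med(xₙ) → 0. -/

import Mathlib

open scoped NNReal

/-- A *quantum probability space*: a von Neumann algebra `M` (presented as a unital
C⋆-algebra; the weak closure properties that we use are recorded explicitly as axioms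
below) together with a normal faithful tracial state `τ` and, for every self-adjoint
element `x` and every Borel set `B ⊆ ℝ`, the spectral projection `specProj x B = E_x(B)`
coming from the spectral resolution `x = ∫ λ dE_x(λ)`. -/
structure QuantumProbabilitySpace (M : Type*) [CStarAlgebra M] [PartialOrder M]
    [StarOrderedRing M] where
  /-- the state -/
  τ : M →ₗ[ℂ] ℂ
  tracial : ∀ a b : M, τ (a * b) = τ (b * a)
  normalized : τ 1 = 1
  pos : ∀ a : M, 0 ≤ a → 0 ≤ (τ a).re ∧ (τ a).im = 0
  faithful : ∀ a : M, 0 ≤ a → τ a = 0 → a = 0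
  /-- spectral projections of self-adjoint elements -/
  specProj : M → Set ℝ → M
  specProj_isIdempotentElem : ∀ (x : M) (B : Set ℝ), IsSelfAdjoint x → MeasurableSet B →
    IsIdempotentElem (specProj x B)
  specProj_isSelfAdjoint : ∀ (x : M) (B : Set ℝ), IsSelfAdjoint x → MeasurableSet B →
    IsSelfAdjoint (specProj x B)
  specProj_univ : ∀ x : M, IsSelfAdjoint x → specProj x Set.univ = 1
  specProj_inter : ∀ (x : M) (B C : Set ℝ), IsSelfAdjoint x → MeasurableSet B →
    MeasurableSet C → specProj x (B ∩ C) = specProj x B * specProj x C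
  /-- normality of the state: the spectral distribution is countably additive -/
  specProj_iUnion : ∀ (x : M) (B : ℕ → Set ℝ), IsSelfAdjoint x → (∀ n, MeasurableSet (B n)) →
    Pairwise (Function.onFun Disjoint B) →
    HasSum (fun n => τ (specProj x (B n))) (τ (specProj x (⋃ n, B n)))
  specProj_commute : ∀ (x : M) (B : Set ℝ), IsSelfAdjoint x → MeasurableSet B →
    Commute x (specProj x B)
  /-- the spectral measure is supported on the spectrum -/
  specProj_spectrum : ∀ (x : M) (B : Set ℝ), IsSelfAdjoint x → MeasurableSet B →
    specProj x B = specProj x (B ∩ spectrum ℝ x)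
  /-- `x` compressed to `E_x((-∞, t])` is at most `t` -/
  specProj_le : ∀ (x : M) (t : ℝ), IsSelfAdjoint x →
    specProj x (Set.Iic t) * x * specProj x (Set.Iic t) ≤ (t : ℂ) • specProj x (Set.Iic t)
  /-- `x` compressed to `E_x([t, ∞))` is at least `t` -/
  specProj_ge : ∀ (x : M) (t : ℝ), IsSelfAdjoint x →
    (t : ℂ) • specProj x (Set.Ici t) ≤ specProj x (Set.Ici t) * x * specProj x (Set.Ici t)
  /-- compatibility with the functional calculus: `E_{f(x)}(B) = E_x(f⁻¹(B))` -/
  specProj_cfc : ∀ (x : M) (f : ℝ → ℝ) (B : Set ℝ), IsSelfAdjoint x → Continuous f →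
    MeasurableSet B → specProj (cfc f x) B = specProj x (f ⁻¹' B)
  /-- the spectral distribution of a (bounded) self-adjoint element is determined by
  its moments -/
  moments_determine : ∀ x y : M, IsSelfAdjoint x → IsSelfAdjoint y →
    (∀ n : ℕ, τ (x ^ n) = τ (y ^ n)) →
    ∀ B : Set ℝ, MeasurableSet B → τ (specProj x B) = τ (specProj y B)

/-- a projection in a von Neumann algebra: a self-adjoint idempotent -/
def IsProjection {M : Type*} [CStarAlgebra M] [PartialOrder M] [StarOrderedRing M]
    (p : M) : Prop := IsSelfAdjoint p ∧ IsIdempotentElem p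

/-- `r` is the supremum `⋁ F` of a family `F` of projections in the lattice of
projections of a von Neumann algebra -/
def IsSupProjection {M : Type*} [CStarAlgebra M] [PartialOrder M] [StarOrderedRing M]
    (F : Set M) (r : M) : Prop :=
  IsProjection r ∧ (∀ p ∈ F, p * r = p) ∧
    ∀ s : M, IsProjection s → (∀ p ∈ F, p * s = p) → r * s = r

/-- the absolute value `|x| = (x⋆x)^{1/2}` of an element of a C⋆-algebra -/
noncomputable def qAbs {M : Type*} [CStarAlgebra M] [PartialOrder M] [StarOrderedRing M]
    (x : M) : M := CFC.sqrt (star x * x)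

namespace QuantumProbabilitySpace

variable {M : Type*} [CStarAlgebra M] [PartialOrder M] [StarOrderedRing M]
variable (Q : QuantumProbabilitySpace M)

/-- the spectral distribution `B ↦ τ(E_x(B))` of a self-adjoint `x` -/
noncomputable def prob (x : M) (B : Set ℝ) : ℝ := (Q.τ (Q.specProj x B)).re


/-- `m` is a median of the self-adjoint element `x`:
`τ(e_{(-∞, m]}(x)) ≥ 1/2` and `τ(e_m^⊥(x)) = τ(e_{[m, ∞)}(x)) ≥ 1/2`. -/
def IsMedian (x : M) (m : ℝ) : Prop :=
  1 / 2 ≤ Q.prob x (Set.Iic m) ∧ 1 / 2 ≤ Q.prob x (Set.Ici m)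

/-- two self-adjoint random variables are identically distributed if their spectral
distributions coincide -/
def IdentDistrib (x y : M) : Prop :=
  ∀ B : Set ℝ, MeasurableSet B → Q.τ (Q.specProj x B) = Q.τ (Q.specProj y B)

/-- a self-adjoint random variable is symmetric if `x` and `-x` are identically
distributed -/
def IsSymmetric (x : M) : Prop := Q.IdentDistrib x (-x)

/-- the von Neumann subalgebra `W*(S)` generated by a set `S`: the smallest subset
containing `S` which is a unital star subalgebra closed under taking spectral
projections (the abstract surrogate for weak closedness). -/
def wstar (S : Set M) : Set M :=
  ⋂₀ {A : Set M | S ⊆ A ∧ (1 : M) ∈ A ∧ (∀ a ∈ A, ∀ b ∈ A, a + b ∈ A) ∧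
    (∀ a ∈ A, ∀ b ∈ A, a * b ∈ A) ∧ (∀ (c : ℂ), ∀ a ∈ A, c • a ∈ A) ∧
    (∀ a ∈ A, star a ∈ A) ∧
    (∀ a ∈ A, ∀ B : Set ℝ, MeasurableSet B → Q.specProj a B ∈ A)}

/-- the `p`-th power `‖x‖_p^p = τ(|x|^p)` of the noncommutative `L_p`-norm -/
noncomputable def lpNormPow (x : M) (p : ℝ) : ℝ := (Q.τ (CFC.rpow (qAbs x) p)).re

end QuantumProbabilitySpace


/-- A realization of the von Neumann tensor product `M ⊗ M`: a quantum probability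
space `(N, R.τ)` together with two unital trace-commuting ⋆-embeddings
`ι₁ : x ↦ x ⊗ 1` and `ι₂ : x ↦ 1 ⊗ x` whose ranges commute, such that the trace is
multiplicative on products, `(τ ⊗ τ)((a ⊗ 1)(1 ⊗ b)) = τ(a) τ(b)` (tensor
independence of the two copies), and which are compatible with spectral
projections (i.e. are normal). -/
structure QuantumProbabilitySpace.IsTensorSquare {M N : Type*}
    [CStarAlgebra M] [PartialOrder M] [StarOrderedRing M]
    [CStarAlgebra N] [PartialOrder N] [StarOrderedRing N]
    (Q : QuantumProbabilitySpace M) (R : QuantumProbabilitySpace N)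
    (i1 i2 : M →⋆ₐ[ℂ] N) : Prop where
  commutes : ∀ a b : M, Commute (i1 a) (i2 b)
  trace_mul : ∀ a b : M, R.τ (i1 a * i2 b) = Q.τ a * Q.τ b
  specProj_fst : ∀ (a : M) (B : Set ℝ), IsSelfAdjoint a → MeasurableSet B →
    R.specProj (i1 a) B = i1 (Q.specProj a B)
  specProj_snd : ∀ (a : M) (B : Set ℝ), IsSelfAdjoint a → MeasurableSet B →
    R.specProj (i2 a) B = i2 (Q.specProj a B)


section Infra
variable {A : Type*} [CStarAlgebra A]

lemma mem_elemental_cfc' (a : A) (f : ℂ → ℂ) :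
    cfc f a ∈ StarAlgebra.elemental ℂ a := by
  refine cfc_cases (· ∈ StarAlgebra.elemental ℂ a) a f (zero_mem _) fun hf ha => ?_
  rw [@cfcHom_eq_of_isStarNormal A _ a ha]
  exact SetLike.coe_mem _

lemma commute_of_mem_elemental' {a b y : A} (h1 : Commute b a) (h2 : Commute (star b) a)
    (hy : y ∈ StarAlgebra.elemental ℂ a) : Commute b y := by
  have hS : IsClosed ((StarSubalgebra.centralizer ℂ {b} : StarSubalgebra ℂ A) : Set A) := by
    rw [StarSubalgebra.coe_centralizer]
    have : (({b} ∪ star {b}) : Set A).centralizer =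
        ⋂ g ∈ (({b} ∪ star {b}) : Set A), {z : A | g * z = z * g} := by
      ext z; simp [Set.mem_centralizer_iff]
    rw [this]
    exact isClosed_biInter fun g _ => isClosed_eq (by fun_prop) (by fun_prop)
  have ha : a ∈ StarSubalgebra.centralizer ℂ {b} := by
    rw [StarSubalgebra.mem_centralizer_iff]
    rintro g rfl
    exact ⟨h1, h2⟩
  have := StarAlgebra.elemental.le_of_mem hS ha hy
  rw [StarSubalgebra.mem_centralizer_iff] at this
  exact (this b rfl).1

variable [PartialOrder A] [StarOrderedRing A]

lemma commute_cfc_real' {a b : A} (ha : IsSelfAdjoint a)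
    (h1 : Commute b a) (h2 : Commute (star b) a) (f : ℝ → ℝ) : Commute b (cfc f a) := by
  rw [cfc_real_eq_complex f ha]
  exact commute_of_mem_elemental' h1 h2 (mem_elemental_cfc' a _)

/-- a projection is nonneg -/
lemma proj_nonneg {p : A} (hsa : IsSelfAdjoint p) (hid : IsIdempotentElem p) : 0 ≤ p := by
  have : p = star p * p := by rw [hsa.star_eq]; exact hid.symm
  rw [this]; exact star_mul_self_nonneg p

lemma proj_le_one {p : A} (hsa : IsSelfAdjoint p) (hid : IsIdempotentElem p) : p ≤ 1 := by
  have h1 : IsIdempotentElem (1 - p) := hid.one_sub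
  have h2 : IsSelfAdjoint (1 - p) := (IsSelfAdjoint.one A).sub hsa
  have := proj_nonneg h2 h1
  calc p = 1 - (1 - p) := by rw [sub_sub_cancel]
  _ ≤ 1 := by simpa using this

/-- qAbs of a self-adjoint element is `cfc |·|`. -/
lemma qAbs_eq_cfc_abs {x : A} (hx : IsSelfAdjoint x) :
    qAbs x = cfc (fun t : ℝ => |t|) x := by
  have hb : (0 : A) ≤ cfc (fun t : ℝ => |t|) x := cfc_nonneg fun t _ => abs_nonneg t
  have hmul : cfc (fun t : ℝ => |t|) x * cfc (fun t : ℝ => |t|) x = star x * x := by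
    rw [← cfc_mul (fun t : ℝ => |t|) (fun t : ℝ => |t|) x]
    have : (fun t : ℝ => |t| * |t|) = fun t : ℝ => t * t := by
      ext t; rw [abs_mul_abs_self]
    rw [this, cfc_mul (fun t : ℝ => t) (fun t : ℝ => t) x, cfc_id' ℝ x, hx.star_eq]
  exact CFC.sqrt_unique hmul hb

lemma sub_const_eq_cfc {x : A} (hx : IsSelfAdjoint x) (a : ℝ) :
    x - (a : ℂ) • 1 = cfc (fun t : ℝ => t - a) x := by
  rw [cfc_sub (fun t : ℝ => t) (fun _ : ℝ => a) x, cfc_id' ℝ x, cfc_const a x]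
  congr 1
  rw [Algebra.algebraMap_eq_smul_one, Complex.coe_smul]

lemma qAbs_sub_const_eq_cfc {x : A} (hx : IsSelfAdjoint x) (a : ℝ) :
    qAbs (x - (a : ℂ) • 1) = cfc (fun t : ℝ => |t - a|) x := by
  have hy : IsSelfAdjoint (x - (a : ℂ) • 1) := by
    refine hx.sub ?_
    rw [IsSelfAdjoint, star_smul, star_one, Complex.star_def, Complex.conj_ofReal]
  rw [qAbs_eq_cfc_abs hy, sub_const_eq_cfc hx a,
    ← cfc_comp (fun t : ℝ => |t|) (fun t : ℝ => t - a) x]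
  rfl

end Infra
namespace QuantumProbabilitySpace

variable {M : Type*} [CStarAlgebra M] [PartialOrder M] [StarOrderedRing M]
variable (Q : QuantumProbabilitySpace M)

lemma tr_re_nonneg {a : M} (h : 0 ≤ a) : 0 ≤ (Q.τ a).re := (Q.pos a h).1

lemma tr_mono {a b : M} (h : a ≤ b) : (Q.τ a).re ≤ (Q.τ b).re := by
  have h1 := (Q.pos (b - a) (sub_nonneg.2 h)).1
  have h2 : Q.τ (b - a) = Q.τ b - Q.τ a := map_sub _ _ _
  rw [h2, Complex.sub_re] at h1
  linarith

lemma tr_one_re : (Q.τ 1).re = 1 := by rw [Q.normalized]; simp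

/-- trace is cyclic-compatible with an idempotent: τ(p a p) = τ(a p) for p idempotent -/
lemma tr_conj_idem {p : M} (hp : IsIdempotentElem p) (a : M) :
    Q.τ (p * a * p) = Q.τ (a * p) := by
  rw [Q.tracial (p * a) p]
  rw [show p * (p * a) = p * p * a by noncomm_ring, hp]
  exact Q.tracial p a

lemma specProj_proj {x : M} (hx : IsSelfAdjoint x) {B : Set ℝ} (hB : MeasurableSet B) :
    IsSelfAdjoint (Q.specProj x B) ∧ IsIdempotentElem (Q.specProj x B) :=
  ⟨Q.specProj_isSelfAdjoint x B hx hB, Q.specProj_isIdempotentElem x B hx hB⟩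

lemma specProj_nonneg {x : M} (hx : IsSelfAdjoint x) {B : Set ℝ} (hB : MeasurableSet B) :
    0 ≤ Q.specProj x B :=
  proj_nonneg (Q.specProj_isSelfAdjoint x B hx hB) (Q.specProj_isIdempotentElem x B hx hB)

lemma specProj_le_one {x : M} (hx : IsSelfAdjoint x) {B : Set ℝ} (hB : MeasurableSet B) :
    Q.specProj x B ≤ 1 :=
  proj_le_one (Q.specProj_isSelfAdjoint x B hx hB) (Q.specProj_isIdempotentElem x B hx hB)

lemma specProj_empty {x : M} (hx : IsSelfAdjoint x) : Q.specProj x ∅ = 0 := by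
  have h := Q.specProj_iUnion x (fun _ => ∅) hx (fun _ => MeasurableSet.empty)
    (fun i j hij => Set.disjoint_empty _)
  rw [Set.iUnion_empty] at h
  have h0 : Q.τ (Q.specProj x ∅) = 0 := by
    by_contra hne
    have h1 : Filter.Tendsto (fun _ : ℕ => Q.τ (Q.specProj x ∅)) Filter.atTop (nhds 0) :=
      h.summable.tendsto_atTop_zero
    exact hne (tendsto_nhds_unique tendsto_const_nhds h1)
  exact Q.faithful _ (Q.specProj_nonneg hx MeasurableSet.empty) h0

lemma tr_specProj_union {x : M} (hx : IsSelfAdjoint x) {B C : Set ℝ} (hB : MeasurableSet B)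
    (hC : MeasurableSet C) (hd : Disjoint B C) :
    Q.τ (Q.specProj x (B ∪ C)) = Q.τ (Q.specProj x B) + Q.τ (Q.specProj x C) := by
  set F : ℕ → Set ℝ := fun n => if n = 0 then B else if n = 1 then C else ∅ with hF
  have hFm : ∀ n, MeasurableSet (F n) := by
    intro n; simp only [hF]; split_ifs <;> first | exact hB | exact hC | exact MeasurableSet.empty
  have hFd : Pairwise (Function.onFun Disjoint F) := by
    intro i j hij
    simp only [Function.onFun, hF]
    split_ifs <;> first
      | exact hd | exact hd.symm | exact Set.disjoint_empty _ | exact Set.empty_disjoint _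
      | omega
  have hU : (⋃ n, F n) = B ∪ C := by
    ext t
    simp only [Set.mem_iUnion, Set.mem_union, hF]
    constructor
    · rintro ⟨n, hn⟩
      by_cases h0 : n = 0
      · left; simpa [h0] using hn
      · by_cases h1 : n = 1
        · right; simpa [h1] using hn
        · simp [h0, h1] at hn
    · rintro (h | h)
      · exact ⟨0, by simpa⟩
      · exact ⟨1, by simpa⟩
  have hsum := Q.specProj_iUnion x F hx hFm hFd
  rw [hU] at hsum
  have hz : ∀ n ∉ ({0, 1} : Finset ℕ), Q.τ (Q.specProj x (F n)) = 0 := by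
    intro n hn
    simp only [Finset.mem_insert, Finset.mem_singleton] at hn
    push_neg at hn
    have : F n = ∅ := by simp [hF, hn.1, hn.2]
    rw [this, Q.specProj_empty hx, map_zero]
  have hsum2 : HasSum (fun n => Q.τ (Q.specProj x (F n)))
      (∑ n ∈ ({0, 1} : Finset ℕ), Q.τ (Q.specProj x (F n))) :=
    hasSum_sum_of_ne_finset_zero hz
  have := hsum.unique hsum2
  rw [this]
  simp [hF]

lemma specProj_compl {x : M} (hx : IsSelfAdjoint x) {B : Set ℝ} (hB : MeasurableSet B) :
    Q.specProj x Bᶜ = 1 - Q.specProj x B := by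
  set p := Q.specProj x B
  set q := Q.specProj x Bᶜ
  have hpq : p * q = 0 := by
    rw [← Q.specProj_inter x B Bᶜ hx hB hB.compl]
    simp [Set.inter_compl_self, Q.specProj_empty hx]
  have hqp : q * p = 0 := by
    rw [← Q.specProj_inter x Bᶜ B hx hB.compl hB]
    simp [Set.compl_inter_self, Q.specProj_empty hx]
  have hp := Q.specProj_proj hx hB
  have hq := Q.specProj_proj hx hB.compl
  have hd_sa : IsSelfAdjoint (1 - p - q) := ((IsSelfAdjoint.one M).sub hp.1).sub hq.1
  have hd_idem : IsIdempotentElem (1 - p - q) := by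
    unfold IsIdempotentElem
    have hp2 : p * p = p := hp.2
    have hq2 : q * q = q := hq.2
    have : (1 - p - q) * (1 - p - q) =
        1 - p - q - p + (p * p) + (p * q) - q + (q * p) + (q * q) := by noncomm_ring
    rw [this, hp2, hq2, hpq, hqp]
    abel
  have htr : Q.τ (1 - p - q) = 0 := by
    have h2 : Q.τ p + Q.τ q = Q.τ (Q.specProj x (B ∪ Bᶜ)) :=
      (Q.tr_specProj_union hx hB hB.compl disjoint_compl_right).symm
    rw [Set.union_compl_self, Q.specProj_univ x hx] at h2
    rw [map_sub, map_sub, Q.normalized]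
    rw [Q.normalized] at h2
    linear_combination -h2
  have h0 := Q.faithful _ (proj_nonneg hd_sa hd_idem) htr
  have h1 : (1 : M) - p - q = 0 := h0
  have : q = 1 - p := by
    have := congrArg (fun z => z + q) h1
    simpa [sub_add_cancel] using this.symm
  exact this

lemma prob_nonneg {x : M} (hx : IsSelfAdjoint x) {B : Set ℝ} (hB : MeasurableSet B) :
    0 ≤ Q.prob x B := Q.tr_re_nonneg (Q.specProj_nonneg hx hB)

lemma prob_mono {x : M} (hx : IsSelfAdjoint x) {B C : Set ℝ} (hB : MeasurableSet B)
    (hC : MeasurableSet C) (hBC : B ⊆ C) : Q.prob x B ≤ Q.prob x C := by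
  have hU : C = B ∪ (C \ B) := by rw [Set.union_diff_cancel hBC]
  have := Q.tr_specProj_union hx hB (hC.diff hB) Set.disjoint_sdiff_right
  rw [← hU] at this
  have hpos := Q.tr_re_nonneg (Q.specProj_nonneg hx (hC.diff hB))
  unfold prob
  rw [this, Complex.add_re]
  linarith

lemma prob_compl {x : M} (hx : IsSelfAdjoint x) {B : Set ℝ} (hB : MeasurableSet B) :
    Q.prob x Bᶜ = 1 - Q.prob x B := by
  unfold prob
  rw [Q.specProj_compl hx hB, map_sub, Complex.sub_re, Q.normalized]
  simp

end QuantumProbabilitySpace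
namespace QuantumProbabilitySpace

variable {M : Type*} [CStarAlgebra M] [PartialOrder M] [StarOrderedRing M]
variable (Q : QuantumProbabilitySpace M)

lemma specProj_subset_Ici {x : M} (hx : IsSelfAdjoint x) {B : Set ℝ} (hB : MeasurableSet B)
    {t : ℝ} (hBt : B ⊆ Set.Ici t) :
    (t : ℂ) • Q.specProj x B ≤ Q.specProj x B * x * Q.specProj x B := by
  set P := Q.specProj x B with hP
  set E := Q.specProj x (Set.Ici t) with hE
  have hPE : P * E = P := by
    rw [hP, hE, ← Q.specProj_inter x B (Set.Ici t) hx hB measurableSet_Ici,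
      Set.inter_eq_left.mpr hBt]
  have hEP : E * P = P := by
    rw [hP, hE, ← Q.specProj_inter x (Set.Ici t) B hx measurableSet_Ici hB,
      Set.inter_eq_right.mpr hBt]
  have hsa : IsSelfAdjoint P := Q.specProj_isSelfAdjoint x B hx hB
  have hge := Q.specProj_ge x t hx
  have hconj := star_left_conjugate_le_conjugate hge P
  rw [hsa.star_eq] at hconj
  calc (t : ℂ) • P = P * ((t : ℂ) • E) * P := by
        rw [mul_smul_comm, smul_mul_assoc, hPE, (Q.specProj_isIdempotentElem x B hx hB)]
  _ ≤ P * (E * x * E) * P := hconj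
  _ = P * x * P := by rw [show P * (E * x * E) * P = (P * E) * x * (E * P) by noncomm_ring,
        hPE, hEP]

lemma specProj_subset_Iic {x : M} (hx : IsSelfAdjoint x) {B : Set ℝ} (hB : MeasurableSet B)
    {t : ℝ} (hBt : B ⊆ Set.Iic t) :
    Q.specProj x B * x * Q.specProj x B ≤ (t : ℂ) • Q.specProj x B := by
  set P := Q.specProj x B with hP
  set E := Q.specProj x (Set.Iic t) with hE
  have hPE : P * E = P := by
    rw [hP, hE, ← Q.specProj_inter x B (Set.Iic t) hx hB measurableSet_Iic,
      Set.inter_eq_left.mpr hBt]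
  have hEP : E * P = P := by
    rw [hP, hE, ← Q.specProj_inter x (Set.Iic t) B hx measurableSet_Iic hB,
      Set.inter_eq_right.mpr hBt]
  have hsa : IsSelfAdjoint P := Q.specProj_isSelfAdjoint x B hx hB
  have hle := Q.specProj_le x t hx
  have hconj := star_left_conjugate_le_conjugate hle P
  rw [hsa.star_eq] at hconj
  calc P * x * P = P * (E * x * E) * P := by
        rw [show P * (E * x * E) * P = (P * E) * x * (E * P) by noncomm_ring, hPE, hEP]
  _ ≤ P * ((t : ℂ) • E) * P := hconj
  _ = (t : ℂ) • P := by
        rw [mul_smul_comm, smul_mul_assoc, hPE, (Q.specProj_isIdempotentElem x B hx hB)]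

lemma prob_qAbs_sub_const {x : M} (hx : IsSelfAdjoint x) (a : ℝ) {ε : ℝ} (hε : 0 < ε) :
    Q.prob (qAbs (x - (a : ℂ) • 1)) (Set.Ici ε)
      = Q.prob x (Set.Iic (a - ε) ∪ Set.Ici (a + ε)) := by
  unfold prob
  rw [qAbs_sub_const_eq_cfc hx a,
    Q.specProj_cfc x (fun t => |t - a|) (Set.Ici ε) hx (by fun_prop) measurableSet_Ici]
  have hset : (fun t : ℝ => |t - a|) ⁻¹' Set.Ici ε = Set.Iic (a - ε) ∪ Set.Ici (a + ε) := by
    ext t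
    simp only [Set.mem_preimage, Set.mem_Ici, Set.mem_union, Set.mem_Iic, le_abs]
    constructor
    · rintro (h | h)
      · right; linarith
      · left; linarith
    · rintro (h | h)
      · right; linarith
      · left; linarith
  rw [hset]

lemma median_close {x : M} (hx : IsSelfAdjoint x) {m a ε : ℝ} (hm : Q.IsMedian x m)
    (hε : 0 < ε) (h : Q.prob (qAbs (x - (a : ℂ) • 1)) (Set.Ici ε) < 1 / 2) : |a - m| < ε := by
  rw [Q.prob_qAbs_sub_const hx a hε] at h
  have hmeas : MeasurableSet (Set.Iic (a - ε) ∪ Set.Ici (a + ε)) :=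
    measurableSet_Iic.union measurableSet_Ici
  have h1 : Q.prob x (Set.Iic (a - ε)) < 1 / 2 :=
    lt_of_le_of_lt (Q.prob_mono hx measurableSet_Iic hmeas Set.subset_union_left) h
  have h2 : Q.prob x (Set.Ici (a + ε)) < 1 / 2 :=
    lt_of_le_of_lt (Q.prob_mono hx measurableSet_Ici hmeas Set.subset_union_right) h
  have hlt1 : a - ε < m := by
    by_contra hc
    push_neg at hc
    have : Q.prob x (Set.Iic m) ≤ Q.prob x (Set.Iic (a - ε)) :=
      Q.prob_mono hx measurableSet_Iic measurableSet_Iic (Set.Iic_subset_Iic.mpr hc)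
    have := hm.1
    linarith
  have hlt2 : m < a + ε := by
    by_contra hc
    push_neg at hc
    have : Q.prob x (Set.Ici m) ≤ Q.prob x (Set.Ici (a + ε)) :=
      Q.prob_mono hx measurableSet_Ici measurableSet_Ici (Set.Ici_subset_Ici.mpr hc)
    have := hm.2
    linarith
  rw [abs_sub_lt_iff]
  constructor <;> linarith

end QuantumProbabilitySpace
namespace QuantumProbabilitySpace

variable {M : Type*} [CStarAlgebra M] [PartialOrder M] [StarOrderedRing M]
variable (Q : QuantumProbabilitySpace M)

/-- trace inequality `τ(e) + τ(f) - 1 ≤ τ(ef)` for commuting projections -/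
lemma tr_commuting_proj_mul {e f : M} (hesa : IsSelfAdjoint e) (hei : IsIdempotentElem e)
    (hfsa : IsSelfAdjoint f) (hfi : IsIdempotentElem f) (hef : Commute e f) :
    (Q.τ e).re + (Q.τ f).re - 1 ≤ (Q.τ (e * f)).re := by
  have hc : Commute (1 - e) (1 - f) :=
    (Commute.one_left (1 - f)).sub_left ((Commute.one_right e).sub_right hef)
  have hq : IsIdempotentElem ((1 - e) * (1 - f)) := by
    unfold IsIdempotentElem
    rw [show (1 - e) * (1 - f) * ((1 - e) * (1 - f))
        = (1 - e) * ((1 - f) * (1 - e)) * (1 - f) by noncomm_ring, ← hc.eq,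
      show (1 - e) * ((1 - e) * (1 - f)) * (1 - f)
        = ((1 - e) * (1 - e)) * ((1 - f) * (1 - f)) by noncomm_ring,
      hei.one_sub, hfi.one_sub]
  have hqsa : IsSelfAdjoint ((1 - e) * (1 - f)) := by
    rw [IsSelfAdjoint, star_mul, ((IsSelfAdjoint.one M).sub hfsa).star_eq,
      ((IsSelfAdjoint.one M).sub hesa).star_eq]
    exact hc.symm.eq
  have hnn := Q.tr_re_nonneg (proj_nonneg hqsa hq)
  have hexp : Q.τ ((1 - e) * (1 - f)) = Q.τ 1 - Q.τ e - Q.τ f + Q.τ (e * f) := by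
    rw [show (1 - e) * (1 - f) = 1 - e - f + e * f by noncomm_ring]
    rw [map_add, map_sub, map_sub]
  rw [hexp] at hnn
  rw [Q.normalized] at hnn
  simp only [Complex.add_re, Complex.sub_re, Complex.one_re] at hnn
  linarith

/-- The key one-sided estimate: if `g` is a projection commuting with `w` and the
compression of `w` to `g` is at most `δ < ε`, then `τ(E_w[ε,∞)) ≤ 1 - τ(g)`. -/
lemma onesided {w g : M} (hw : IsSelfAdjoint w) (hgsa : IsSelfAdjoint g)
    (hgi : IsIdempotentElem g) (hcomm : Commute g w) {ε δ : ℝ} (hδε : δ < ε)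
    (hgwg : g * w * g ≤ (δ : ℂ) • g) :
    Q.prob w (Set.Ici ε) ≤ 1 - (Q.τ g).re := by
  set c : ℝ := (ε - δ)⁻¹ with hc
  have hcpos : 0 < c := inv_pos.mpr (by linarith)
  set φ : ℝ → ℝ := fun t => min (max ((t - δ) * c) 0) 1 with hφ
  set ψ : ℝ → ℝ := fun t => max (t - δ) 0 with hψ
  have hφc : Continuous φ :=
    (((continuous_id.sub continuous_const).mul continuous_const).max continuous_const).min
      continuous_const
  have hψc : Continuous ψ := (continuous_id.sub continuous_const).max continuous_const
  set h : M := cfc φ w with hh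
  set m : M := cfc ψ w with hm
  have hh_nonneg : 0 ≤ h := cfc_nonneg fun t _ => le_min (le_max_right _ _) zero_le_one
  have hh_le_one : h ≤ 1 := cfc_le_one φ w fun t _ => min_le_right _ _
  have hm_nonneg : 0 ≤ m := cfc_nonneg fun t _ => le_max_right _ _
  have hh_sa : IsSelfAdjoint h := IsSelfAdjoint.of_nonneg hh_nonneg
  have hm_sa : IsSelfAdjoint m := IsSelfAdjoint.of_nonneg hm_nonneg
  -- h ≤ c • m
  have hh_le_cm : h ≤ c • m := by
    have : cfc (fun t => c • ψ t) w = c • m := cfc_smul c ψ w hψc.continuousOn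
    rw [← this]
    refine cfc_mono fun t _ => ?_
    have : max ((t - δ) * c) 0 = c * max (t - δ) 0 := by
      rw [mul_comm (t - δ) c, mul_max_of_nonneg _ _ hcpos.le, mul_zero]
    calc φ t ≤ max ((t - δ) * c) 0 := min_le_left _ _
    _ = c • ψ t := by rw [this]; rfl
  -- the spectral projection of w at [ε, ∞) equals that of h at [1, ∞)
  set r : M := Q.specProj w (Set.Ici ε) with hr
  have hrproj := Q.specProj_proj hw (measurableSet_Ici (a := ε))
  have hr_eq : Q.specProj h (Set.Ici 1) = r := by
    rw [hh, Q.specProj_cfc w φ (Set.Ici 1) hw hφc measurableSet_Ici]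
    congr 1
    ext t
    simp only [Set.mem_preimage, Set.mem_Ici, hφ]
    constructor
    · intro ht
      have h1 : (1 : ℝ) ≤ max ((t - δ) * c) 0 := le_trans ht (min_le_left _ _)
      have h2 : (1 : ℝ) ≤ (t - δ) * c := by
        rcases le_max_iff.mp h1 with h | h
        · exact h
        · linarith
      have h3 : ε - δ ≤ t - δ := by
        rw [hc] at h2
        have h4 : 0 < ε - δ := by linarith
        calc ε - δ = (ε - δ) * 1 := by ring
        _ ≤ (ε - δ) * ((t - δ) * (ε - δ)⁻¹) := by
              apply mul_le_mul_of_nonneg_left h2 h4.le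
        _ = (t - δ) * ((ε - δ) * (ε - δ)⁻¹) := by ring
        _ = t - δ := by rw [mul_inv_cancel₀ h4.ne', mul_one]
      linarith
    · intro ht
      have h2 : (1 : ℝ) ≤ (t - δ) * c := by
        rw [hc]
        have h4 : 0 < ε - δ := by linarith
        calc (1 : ℝ) = (ε - δ) * (ε - δ)⁻¹ := (mul_inv_cancel₀ h4.ne').symm
        _ ≤ (t - δ) * (ε - δ)⁻¹ := by
              apply mul_le_mul_of_nonneg_right (by linarith) (inv_pos.mpr h4).le
      exact le_min (le_trans h2 (le_max_left _ _)) le_rfl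
  have hh_ge : r ≤ r * h * r := by
    have := Q.specProj_ge h 1 hh_sa
    rw [hr_eq] at this
    simpa using this
  -- g m g = 0
  have hgm : Commute g m := commute_cfc_real' hw hcomm (by rw [hgsa.star_eq]; exact hcomm) ψ
  have hgw1 : Commute g (w - (δ : ℂ) • 1) := by
    refine hcomm.sub_right ?_
    exact Commute.smul_right (Commute.one_right g) _
  have hs_nonpos : g * (w - (δ : ℂ) • 1) * g ≤ 0 := by
    have : g * (w - (δ : ℂ) • 1) * g = g * w * g - (δ : ℂ) • g := by
      rw [mul_sub, sub_mul, mul_smul_comm, smul_mul_assoc, mul_one, hgi.eq]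
    rw [this]
    exact sub_nonpos.mpr hgwg
  have hm_sq : m * (w - (δ : ℂ) • 1) = m * m := by
    rw [sub_const_eq_cfc hw δ, hm, ← cfc_mul ψ (fun t => t - δ) w hψc.continuousOn
      (by fun_prop), ← cfc_mul ψ ψ w hψc.continuousOn hψc.continuousOn]
    apply cfc_congr
    intro t _
    simp only [hψ]
    rcases le_or_gt (t - δ) 0 with h | h
    · rw [max_eq_right h, zero_mul, zero_mul]
    · rw [max_eq_left h.le]
  have hmgm_nonneg : 0 ≤ m * g * m := by
    have : m * g * m = star (g * m) * (g * m) := by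
      rw [star_mul, hgsa.star_eq, hm_sa.star_eq,
        show m * g * (g * m) = m * (g * g) * m by noncomm_ring, hgi.eq]
    rw [this]
    exact star_mul_self_nonneg _
  have htr_mgm_nonpos : (Q.τ (m * g * m)).re ≤ 0 := by
    have h1 : Q.τ (m * g * m) = Q.τ (m * m * g) := by
      rw [Q.tracial (m * g) m, show m * (m * g) = m * m * g by noncomm_ring]
    set s : M := g * (w - (δ : ℂ) • 1) * g with hs
    have hwg : (w - (δ : ℂ) • 1) * g = s := by
      rw [hs]
      calc (w - (δ : ℂ) • 1) * g = (w - (δ : ℂ) • 1) * (g * g) := by rw [hgi.eq]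
      _ = g * (w - (δ : ℂ) • 1) * g := by rw [← mul_assoc, ← hgw1.eq]
    have h2 : m * m * g = m * s := by rw [← hm_sq, mul_assoc, hwg]
    have h3 : Q.τ (m * s) = Q.τ (CFC.sqrt m * s * CFC.sqrt m) := by
      rw [Q.tracial (CFC.sqrt m * s) (CFC.sqrt m),
        show CFC.sqrt m * (CFC.sqrt m * s) = (CFC.sqrt m * CFC.sqrt m) * s by noncomm_ring,
        CFC.sqrt_mul_sqrt_self m hm_nonneg]
    have h4 : CFC.sqrt m * s * CFC.sqrt m ≤ 0 := by
      have h5 := star_left_conjugate_le_conjugate hs_nonpos (CFC.sqrt m)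
      have h6 : IsSelfAdjoint (CFC.sqrt m) := IsSelfAdjoint.of_nonneg (CFC.sqrt_nonneg _)
      rw [h6.star_eq] at h5
      simpa [hs] using h5
    rw [h1, h2, h3]
    calc (Q.τ (CFC.sqrt m * s * CFC.sqrt m)).re ≤ (Q.τ 0).re := Q.tr_mono h4
    _ = 0 := by rw [map_zero]; rfl
  have hmgm_zero : m * g * m = 0 := by
    refine Q.faithful _ hmgm_nonneg ?_
    have him := (Q.pos _ hmgm_nonneg).2
    have hre := le_antisymm htr_mgm_nonpos (Q.tr_re_nonneg hmgm_nonneg)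
    exact Complex.ext hre him
  have hgmg_zero : g * m * g = 0 := by
    have hsq : (g * m * g) * (g * m * g) = 0 := by
      rw [show (g * m * g) * (g * m * g) = g * ((m * (g * g) * m)) * g by noncomm_ring, hgi.eq]
      rw [show g * (m * g * m) * g = g * (m * g * m) * g from rfl, hmgm_zero]
      noncomm_ring
    have hsa2 : IsSelfAdjoint (g * m * g) := by
      rw [IsSelfAdjoint, star_mul, star_mul, hgsa.star_eq, hm_sa.star_eq]
      noncomm_ring
    have : ‖g * m * g‖ * ‖g * m * g‖ = 0 := by
      rw [← CStarRing.norm_star_mul_self, hsa2.star_eq, hsq, norm_zero]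
    have := mul_self_eq_zero.mp this
    exact norm_eq_zero.mp this
  -- conclude
  have step1 : Q.prob w (Set.Ici ε) ≤ (Q.τ (r * h * r)).re := Q.tr_mono hh_ge
  have step2 : Q.τ (r * h * r) = Q.τ (h * r) := Q.tr_conj_idem hrproj.2 h
  have step3 : (Q.τ (h * r)).re ≤ (Q.τ h).re := by
    have h1 : Q.τ (h * (1 - r)) = Q.τ ((1 - r) * h * (1 - r)) := (Q.tr_conj_idem hrproj.2.one_sub h).symm
    have h2 : 0 ≤ (1 - r) * h * (1 - r) := by
      have := star_left_conjugate_nonneg hh_nonneg (1 - r)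
      rwa [((IsSelfAdjoint.one M).sub hrproj.1).star_eq] at this
    have h3 := Q.tr_re_nonneg h2
    rw [← h1, mul_sub, mul_one, map_sub, Complex.sub_re] at h3
    linarith
  have step4 : (Q.τ (h * g)).re ≤ 0 := by
    have h1 : Q.τ (h * g) = Q.τ (g * h * g) := (Q.tr_conj_idem hgi h).symm
    have h2 : g * h * g ≤ c • (g * m * g) := by
      have := star_left_conjugate_le_conjugate hh_le_cm g
      rw [hgsa.star_eq] at this
      calc g * h * g ≤ g * (c • m) * g := this
      _ = c • (g * m * g) := by rw [mul_smul_comm, smul_mul_assoc]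
    rw [hgmg_zero, smul_zero] at h2
    have := Q.tr_mono h2
    rw [map_zero] at this
    rw [h1]
    simpa using this
  have step5 : (Q.τ (h * (1 - g))).re ≤ 1 - (Q.τ g).re := by
    have h1 : Q.τ (h * (1 - g)) = Q.τ ((1 - g) * h * (1 - g)) :=
      (Q.tr_conj_idem hgi.one_sub h).symm
    have h2 : (1 - g) * h * (1 - g) ≤ 1 - g := by
      have := star_left_conjugate_le_conjugate hh_le_one (1 - g)
      rw [((IsSelfAdjoint.one M).sub hgsa).star_eq] at this
      calc (1 - g) * h * (1 - g) ≤ (1 - g) * 1 * (1 - g) := this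
      _ = 1 - g := by rw [mul_one, hgi.one_sub.eq]
    have h3 := Q.tr_mono h2
    rw [map_sub, Complex.sub_re, Q.normalized] at h3
    rw [h1]
    simpa using h3
  have hsplit : (Q.τ h).re = (Q.τ (h * g)).re + (Q.τ (h * (1 - g))).re := by
    rw [mul_sub, mul_one, map_sub, Complex.sub_re]
    ring
  calc Q.prob w (Set.Ici ε) ≤ (Q.τ (r * h * r)).re := step1
  _ = (Q.τ (h * r)).re := by rw [step2]
  _ ≤ (Q.τ h).re := step3
  _ = (Q.τ (h * g)).re + (Q.τ (h * (1 - g))).re := hsplit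
  _ ≤ 0 + (1 - (Q.τ g).re) := add_le_add step4 step5
  _ = 1 - (Q.τ g).re := by ring

end QuantumProbabilitySpace
namespace QuantumProbabilitySpace

variable {M : Type*} [CStarAlgebra M] [PartialOrder M] [StarOrderedRing M]
variable (Q : QuantumProbabilitySpace M)

lemma prob_neg {w : M} (hw : IsSelfAdjoint w) (ε : ℝ) :
    Q.prob (-w) (Set.Ici ε) = Q.prob w (Set.Iic (-ε)) := by
  have hneg : -w = cfc (fun t : ℝ => -t) w := by
    rw [cfc_neg (fun t : ℝ => t) w, cfc_id' ℝ w]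
  rw [hneg]
  unfold prob
  rw [Q.specProj_cfc w _ _ hw (by fun_prop) measurableSet_Ici]
  have hset : (fun t : ℝ => -t) ⁻¹' Set.Ici ε = Set.Iic (-ε) := by
    ext t
    simp only [Set.mem_preimage, Set.mem_Ici, Set.mem_Iic]
    constructor <;> intro <;> linarith
  rw [hset]

lemma prob_qAbs_split {w : M} (hw : IsSelfAdjoint w) {ε : ℝ} (hε : 0 < ε) :
    Q.prob (qAbs w) (Set.Ici ε) = Q.prob w (Set.Iic (-ε)) + Q.prob w (Set.Ici ε) := by
  rw [qAbs_eq_cfc_abs hw]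
  unfold prob
  rw [Q.specProj_cfc w _ _ hw continuous_abs measurableSet_Ici]
  have hset : (fun t : ℝ => |t|) ⁻¹' Set.Ici ε = Set.Iic (-ε) ∪ Set.Ici ε := by
    ext t
    simp only [Set.mem_preimage, Set.mem_Ici, Set.mem_union, Set.mem_Iic, le_abs]
    constructor
    · rintro (hc | hc)
      · right; exact hc
      · left; linarith
    · rintro (hc | hc)
      · right; linarith
      · left; exact hc
  rw [hset, Q.tr_specProj_union hw measurableSet_Iic measurableSet_Ici
    (Set.Iic_disjoint_Ici.mpr (by linarith)), Complex.add_re]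

end QuantumProbabilitySpace

section Maps
variable {M N : Type*} [CStarAlgebra M] [PartialOrder M] [StarOrderedRing M]
    [CStarAlgebra N] [PartialOrder N] [StarOrderedRing N]

lemma starAlgHom_nonneg (i : M →⋆ₐ[ℂ] N) {a : M} (h : 0 ≤ a) : 0 ≤ i a := by
  have hrw : a = star (CFC.sqrt a) * CFC.sqrt a := by
    rw [(IsSelfAdjoint.of_nonneg (CFC.sqrt_nonneg _)).star_eq, CFC.sqrt_mul_sqrt_self a h]
  rw [hrw, map_mul, map_star]
  exact star_mul_self_nonneg _

lemma starAlgHom_mono (i : M →⋆ₐ[ℂ] N) {a b : M} (h : a ≤ b) : i a ≤ i b := by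
  rw [← sub_nonneg, ← map_sub]
  exact starAlgHom_nonneg i (sub_nonneg.mpr h)

lemma starAlgHom_isSelfAdjoint (i : M →⋆ₐ[ℂ] N) {a : M} (h : IsSelfAdjoint a) :
    IsSelfAdjoint (i a) := by
  rw [IsSelfAdjoint, ← map_star, h.star_eq]

lemma starAlgHom_isIdempotentElem (i : M →⋆ₐ[ℂ] N) {a : M} (h : IsIdempotentElem a) :
    IsIdempotentElem (i a) := by
  rw [IsIdempotentElem, ← map_mul, h.eq]

end Maps
section Main
variable {M N : Type*} [CStarAlgebra M] [PartialOrder M] [StarOrderedRing M]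
    [CStarAlgebra N] [PartialOrder N] [StarOrderedRing N]
variable (Q : QuantumProbabilitySpace M) (R : QuantumProbabilitySpace N)

lemma side_bound (i1 i2 : M →⋆ₐ[ℂ] N) (hts : Q.IsTensorSquare R i1 i2)
    {x : M} (hx : IsSelfAdjoint x) (a : ℝ) {ε : ℝ} (hε : 0 < ε) :
    R.prob (i1 x - i2 x) (Set.Ici ε)
      ≤ (1 - Q.prob x (Set.Iic (a + ε / 3))) + (1 - Q.prob x (Set.Ici (a - ε / 3))) := by
  set u := i1 x with hu_def
  set v := i2 x with hv_def
  have hu : IsSelfAdjoint u := starAlgHom_isSelfAdjoint i1 hx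
  have hv : IsSelfAdjoint v := starAlgHom_isSelfAdjoint i2 hx
  have hw : IsSelfAdjoint (u - v) := hu.sub hv
  set c1 : ℝ := a + ε / 3 with hc1
  set c2 : ℝ := a - ε / 3 with hc2
  set E := Q.specProj x (Set.Iic c1) with hE_def
  set F := Q.specProj x (Set.Ici c2) with hF_def
  have hE := Q.specProj_proj hx (measurableSet_Iic (a := c1))
  have hF := Q.specProj_proj hx (measurableSet_Ici (a := c2))
  set e := i1 E with he_def
  set f := i2 F with hf_def
  have hesa : IsSelfAdjoint e := starAlgHom_isSelfAdjoint i1 hE.1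
  have hfsa : IsSelfAdjoint f := starAlgHom_isSelfAdjoint i2 hF.1
  have hei : IsIdempotentElem e := starAlgHom_isIdempotentElem i1 hE.2
  have hfi : IsIdempotentElem f := starAlgHom_isIdempotentElem i2 hF.2
  have hef : Commute e f := hts.commutes E F
  have hgsa : IsSelfAdjoint (e * f) := by
    rw [IsSelfAdjoint, star_mul, hesa.star_eq, hfsa.star_eq]
    exact hef.symm.eq
  have hgi : IsIdempotentElem (e * f) := hei.mul_of_commute hef hfi
  have heu : Commute e u := ((Q.specProj_commute x _ hx measurableSet_Iic).map i1).symm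
  have hfu : Commute f u := (hts.commutes x F).symm
  have hev : Commute e v := hts.commutes E x
  have hfv : Commute f v := ((Q.specProj_commute x _ hx measurableSet_Ici).map i2).symm
  have hgu : Commute (e * f) u := heu.mul_left hfu
  have hgv : Commute (e * f) v := hev.mul_left hfv
  have hgw : Commute (e * f) (u - v) := hgu.sub_right hgv
  -- compression bounds
  have hgug : (e * f) * u * (e * f) ≤ (c1 : ℂ) • (e * f) := by
    have h1 : E * x * E ≤ (c1 : ℂ) • E := Q.specProj_le x c1 hx
    have h2 : e * u * e ≤ (c1 : ℂ) • e := by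
      have := starAlgHom_mono i1 h1
      simpa only [map_mul, map_smul] using this
    have h3 := star_left_conjugate_le_conjugate h2 f
    rw [hfsa.star_eq] at h3
    have h4 : f * (e * u * e) * f = (e * f) * u * (e * f) := by
      rw [show f * (e * u * e) * f = (f * e) * u * (e * f) by noncomm_ring, hef.symm.eq]
    have h5 : f * ((c1 : ℂ) • e) * f = (c1 : ℂ) • (e * f) := by
      rw [mul_smul_comm, smul_mul_assoc]
      congr 1
      rw [show f * e * f = (f * e) * f from rfl, hef.symm.eq, mul_assoc, hfi.eq]
    rw [h4, h5] at h3
    exact h3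
  have hgvg : (c2 : ℂ) • (e * f) ≤ (e * f) * v * (e * f) := by
    have h1 : (c2 : ℂ) • F ≤ F * x * F := Q.specProj_ge x c2 hx
    have h2 : (c2 : ℂ) • f ≤ f * v * f := by
      have := starAlgHom_mono i2 h1
      simpa only [map_mul, map_smul] using this
    have h3 := star_left_conjugate_le_conjugate h2 e
    rw [hesa.star_eq] at h3
    have h4 : e * (f * v * f) * e = (e * f) * v * (e * f) := by
      rw [show e * (f * v * f) * e = (e * f) * v * (f * e) by noncomm_ring, hef.symm.eq]
    have h5 : e * ((c2 : ℂ) • f) * e = (c2 : ℂ) • (e * f) := by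
      rw [mul_smul_comm, smul_mul_assoc]
      congr 1
      rw [show e * f * e = e * (f * e) by noncomm_ring, hef.symm.eq, ← mul_assoc, hei.eq]
    rw [h4, h5] at h3
    exact h3
  have hgwg : (e * f) * (u - v) * (e * f) ≤ ((2 * ε / 3 : ℝ) : ℂ) • (e * f) := by
    have h1 : (e * f) * (u - v) * (e * f)
        = (e * f) * u * (e * f) - (e * f) * v * (e * f) := by noncomm_ring
    rw [h1]
    have h2 := sub_le_sub hgug hgvg
    have h3 : (c1 : ℂ) • (e * f) - (c2 : ℂ) • (e * f) = ((2 * ε / 3 : ℝ) : ℂ) • (e * f) := by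
      rw [← sub_smul]
      congr 1
      rw [hc1, hc2]
      push_cast
      ring
    rw [h3] at h2
    exact h2
  have hone := R.onesided hw hgsa hgi hgw (by linarith : 2 * ε / 3 < ε) hgwg
  -- traces
  have htre : R.τ e = Q.τ E := by
    have := hts.trace_mul E 1
    rw [map_one, mul_one, Q.normalized, mul_one] at this
    exact this
  have htrf : R.τ f = Q.τ F := by
    have := hts.trace_mul 1 F
    rw [map_one, one_mul, Q.normalized, one_mul] at this
    exact this
  have htrg := R.tr_commuting_proj_mul hesa hei hfsa hfi hef
  rw [htre, htrf] at htrg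
  have : (1 : ℝ) - (R.τ (e * f)).re
      ≤ (1 - Q.prob x (Set.Iic c1)) + (1 - Q.prob x (Set.Ici c2)) := by
    unfold QuantumProbabilitySpace.prob
    rw [← hE_def, ← hF_def]
    linarith
  exact le_trans hone this

lemma symmetrization_bound (i1 i2 : M →⋆ₐ[ℂ] N) (hts : Q.IsTensorSquare R i1 i2)
    {x : M} (hx : IsSelfAdjoint x) (a : ℝ) {ε : ℝ} (hε : 0 < ε) :
    R.prob (qAbs (i1 x - i2 x)) (Set.Ici ε)
      ≤ 4 * Q.prob (qAbs (x - (a : ℂ) • 1)) (Set.Ici (ε / 3)) := by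
  have hswap : Q.IsTensorSquare R i2 i1 :=
    { commutes := fun p q => (hts.commutes q p).symm
      trace_mul := fun p q => by
        rw [← (hts.commutes q p).eq, hts.trace_mul q p, mul_comm]
      specProj_fst := hts.specProj_snd
      specProj_snd := hts.specProj_fst }
  have hu : IsSelfAdjoint (i1 x) := starAlgHom_isSelfAdjoint i1 hx
  have hv : IsSelfAdjoint (i2 x) := starAlgHom_isSelfAdjoint i2 hx
  have hw : IsSelfAdjoint (i1 x - i2 x) := hu.sub hv
  have hε3 : 0 < ε / 3 := by linarith
  -- tail bounds in M
  have hmeasU : MeasurableSet (Set.Iic (a - ε / 3) ∪ Set.Ici (a + ε / 3)) :=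
    measurableSet_Iic.union measurableSet_Ici
  have hqa : Q.prob x (Set.Iic (a - ε / 3) ∪ Set.Ici (a + ε / 3))
      = Q.prob (qAbs (x - (a : ℂ) • 1)) (Set.Ici (ε / 3)) :=
    (Q.prob_qAbs_sub_const hx a hε3).symm
  have ht1 : 1 - Q.prob x (Set.Iic (a + ε / 3))
      ≤ Q.prob (qAbs (x - (a : ℂ) • 1)) (Set.Ici (ε / 3)) := by
    have hcompl := Q.prob_compl hx (measurableSet_Iic (a := a + ε / 3))
    rw [Set.compl_Iic] at hcompl
    rw [← hcompl, ← hqa]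
    exact Q.prob_mono hx measurableSet_Ioi hmeasU
      (fun t ht => Or.inr (le_of_lt (Set.mem_Ioi.mp ht)))
  have ht2 : 1 - Q.prob x (Set.Ici (a - ε / 3))
      ≤ Q.prob (qAbs (x - (a : ℂ) • 1)) (Set.Ici (ε / 3)) := by
    have hcompl := Q.prob_compl hx (measurableSet_Ici (a := a - ε / 3))
    rw [Set.compl_Ici] at hcompl
    rw [← hcompl, ← hqa]
    exact Q.prob_mono hx measurableSet_Iio hmeasU
      (fun t ht => Or.inl (le_of_lt (Set.mem_Iio.mp ht)))
  have hb1 := side_bound Q R i1 i2 hts hx a hε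
  have hb2 := side_bound Q R i2 i1 hswap hx a hε
  have hsplit := R.prob_qAbs_split hw hε
  have hneg : R.prob (i1 x - i2 x) (Set.Iic (-ε)) = R.prob (i2 x - i1 x) (Set.Ici ε) := by
    rw [← R.prob_neg hw ε, neg_sub]
  rw [hsplit, hneg]
  linarith

end Main
/-- If `x n - α n → 0` in measure, then the symmetrizations
`x̂ n = x n ⊗ 1 - 1 ⊗ x n` converge to `0` in measure and `α n - med(x n) → 0`;
in particular, if `x n → 0` in measure then `med(x n) → 0`. -/
theorem tendsto_symmetrization_of_tendsto_in_measure {M N : Type*}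
    [CStarAlgebra M] [PartialOrder M] [StarOrderedRing M]
    [CStarAlgebra N] [PartialOrder N] [StarOrderedRing N]
    (Q : QuantumProbabilitySpace M) (R : QuantumProbabilitySpace N)
    (i1 i2 : M →⋆ₐ[ℂ] N) (hts : Q.IsTensorSquare R i1 i2)
    (x : ℕ → M) (hsa : ∀ k, IsSelfAdjoint (x k))
    (med : ℕ → ℝ) (hmed : ∀ k, Q.IsMedian (x k) (med k))
    (a : ℕ → ℝ)
    (hconv : ∀ ε : ℝ, 0 < ε → Filter.Tendsto
      (fun k => Q.prob (qAbs (x k - (a k : ℂ) • 1)) (Set.Ici ε)) Filter.atTop (nhds 0)) :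
    (∀ ε : ℝ, 0 < ε → Filter.Tendsto
        (fun k => R.prob (qAbs (i1 (x k) - i2 (x k))) (Set.Ici ε))
        Filter.atTop (nhds 0)) ∧
      Filter.Tendsto (fun k => a k - med k) Filter.atTop (nhds 0) ∧
      ((∀ ε : ℝ, 0 < ε → Filter.Tendsto
          (fun k => Q.prob (qAbs (x k)) (Set.Ici ε)) Filter.atTop (nhds 0)) →
        Filter.Tendsto med Filter.atTop (nhds 0)) := by
  refine ⟨?_, ?_, ?_⟩
  · intro ε hε
    have hle : ∀ k, R.prob (qAbs (i1 (x k) - i2 (x k))) (Set.Ici ε)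
        ≤ 4 * Q.prob (qAbs (x k - (a k : ℂ) • 1)) (Set.Ici (ε / 3)) :=
      fun k => symmetrization_bound Q R i1 i2 hts (hsa k) (a k) hε
    have h0 : ∀ k, 0 ≤ R.prob (qAbs (i1 (x k) - i2 (x k))) (Set.Ici ε) := by
      intro k
      have hw : IsSelfAdjoint (i1 (x k) - i2 (x k)) :=
        (starAlgHom_isSelfAdjoint i1 (hsa k)).sub (starAlgHom_isSelfAdjoint i2 (hsa k))
      have habs : IsSelfAdjoint (qAbs (i1 (x k) - i2 (x k))) := by
        rw [qAbs_eq_cfc_abs hw]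
        exact IsSelfAdjoint.of_nonneg (cfc_nonneg fun t _ => abs_nonneg t)
      exact R.prob_nonneg habs measurableSet_Ici
    have htend : Filter.Tendsto
        (fun k => 4 * Q.prob (qAbs (x k - (a k : ℂ) • 1)) (Set.Ici (ε / 3)))
        Filter.atTop (nhds 0) := by
      have := (hconv (ε / 3) (by linarith)).const_mul (4 : ℝ)
      simpa using this
    exact squeeze_zero h0 hle htend
  · rw [NormedAddCommGroup.tendsto_nhds_zero]
    intro ε hε
    have hev := (hconv ε hε).eventually (gt_mem_nhds (by norm_num : (0 : ℝ) < 1 / 2))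
    filter_upwards [hev] with k hk
    have := Q.median_close (hsa k) (hmed k) hε hk
    rw [Real.norm_eq_abs]
    exact this
  · intro h0
    rw [NormedAddCommGroup.tendsto_nhds_zero]
    intro ε hε
    have hev := (h0 ε hε).eventually (gt_mem_nhds (by norm_num : (0 : ℝ) < 1 / 2))
    filter_upwards [hev] with k hk
    have hk' : Q.prob (qAbs (x k - ((0 : ℝ) : ℂ) • 1)) (Set.Ici ε) < 1 / 2 := by
      simpa using hk
    have := Q.median_close (hsa k) (hmed k) hε hk'
    rw [Real.norm_eq_abs]
    simpa using this
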